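/- Let (γ, T, N, B, κ, τ) be a framed curve in ℝ³ parametrized by arclength, defined on the closed interval [0, L] with L > 0, whose torsion is a nonzero constant τ, and which lies on the unit sphere (there exists c ∈ ℝ³ with ‖γ(s) − c‖ = 1 for all s ∈ [0, L]). Then L < π/|τ|. -/

import Mathlib

open scoped RealInnerProductSpace

/-- The cross product of two vectors in Euclidean 3-space. -/
noncomputable def cross3 (u v : EuclideanSpace ℝ (Fin 3)) : EuclideanSpace ℝ (Fin 3) :=
  WithLp.toLp 2 ![u 1 * v 2 - u 2 * v 1, u 2 * v 0 - u 0 * v 2, u 0 * v 1 - u 1 * v 0]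

/-- A framed curve in ℝ³, parametrized by arclength, on the parameter set `I`:
the maps `T`, `N`, `B` form a positively oriented orthonormal frame at each `s ∈ I`,
`κ` and `τ` are continuous on `I`, and the Frenet equations
`γ' = T`, `T' = κ·N`, `N' = −κ·T + τ·B`, `B' = −τ·N` hold on `I`. -/
structure FramedCurveOn (γ T N B : ℝ → EuclideanSpace ℝ (Fin 3)) (κ τ : ℝ → ℝ)
    (I : Set ℝ) : Prop where
  contκ : ContinuousOn κ I
  contτ : ContinuousOn τ I
  unitT : ∀ s ∈ I, ‖T s‖ = 1
  unitN : ∀ s ∈ I, ‖N s‖ = 1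
  unitB : ∀ s ∈ I, ‖B s‖ = 1
  orthoTN : ∀ s ∈ I, ⟪T s, N s⟫ = (0 : ℝ)
  orthoTB : ∀ s ∈ I, ⟪T s, B s⟫ = (0 : ℝ)
  orthoNB : ∀ s ∈ I, ⟪N s, B s⟫ = (0 : ℝ)
  oriented : ∀ s ∈ I, B s = cross3 (T s) (N s)
  derivγ : ∀ s ∈ I, HasDerivWithinAt γ (T s) I s
  derivT : ∀ s ∈ I, HasDerivWithinAt T (κ s • N s) I s
  derivN : ∀ s ∈ I, HasDerivWithinAt N ((-κ s) • T s + τ s • B s) I s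
  derivB : ∀ s ∈ I, HasDerivWithinAt B ((-τ s) • N s) I s

/-- A closed framed curve in ℝ³ of period `L`: a framed curve defined on all of ℝ,
all of whose data is `L`-periodic. -/
structure ClosedFramedCurve (γ T N B : ℝ → EuclideanSpace ℝ (Fin 3)) (κ τ : ℝ → ℝ)
    (L : ℝ) : Prop where
  framed : FramedCurveOn γ T N B κ τ Set.univ
  periodicγ : Function.Periodic γ L
  periodicT : Function.Periodic T L
  periodicN : Function.Periodic N L
  periodicB : Function.Periodic B L
  periodicκ : Function.Periodic κ L
  periodicτ : Function.Periodic τ L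

/-- A framed curve of nonzero constant torsion `τ₀` on the unit sphere, defined on the
closed interval `[0, L]` with `L > 0`, has arclength `L < π/|τ₀|`. -/
theorem spherical_constant_torsion_length_bound (γ T N B : ℝ → EuclideanSpace ℝ (Fin 3))
    (κ τ : ℝ → ℝ) (L : ℝ) (hL : 0 < L)
    (h : FramedCurveOn γ T N B κ τ (Set.Icc 0 L))
    (τ₀ : ℝ) (hτ₀ : τ₀ ≠ 0) (hτ : ∀ s ∈ Set.Icc (0 : ℝ) L, τ s = τ₀)
    (c : EuclideanSpace ℝ (Fin 3)) (hsphere : ∀ s ∈ Set.Icc (0 : ℝ) L, ‖γ s - c‖ = 1) :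
    L < Real.pi / |τ₀| := by
  set I := Set.Icc (0:ℝ) L with hIdef
  have hI : UniqueDiffOn ℝ I := uniqueDiffOn_Icc hL
  set p : ℝ → EuclideanSpace ℝ (Fin 3) := fun s => γ s - c with hp_def
  set a : ℝ → ℝ := fun s => ⟪p s, T s⟫ with ha_def
  set b : ℝ → ℝ := fun s => ⟪p s, N s⟫ with hb_def
  set cc : ℝ → ℝ := fun s => ⟪p s, B s⟫ with hcc_def
  have hp : ∀ s ∈ I, HasDerivWithinAt p (T s) I s := fun s hs => (h.derivγ s hs).sub_const c
  -- ⟪p,p⟫ = 1 on I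
  have hpp1 : ∀ s ∈ I, ⟪p s, p s⟫ = (1:ℝ) := by
    intro s hs
    rw [real_inner_self_eq_norm_sq, hsphere s hs]; norm_num
  -- a = 0 on I
  have ha0 : ∀ s ∈ I, a s = 0 := by
    intro s hs
    have d1 : HasDerivWithinAt (fun t => ⟪p t, p t⟫) (⟪p s, T s⟫ + ⟪T s, p s⟫) I s :=
      (hp s hs).inner ℝ (hp s hs)
    have d2 : HasDerivWithinAt (fun t => ⟪p t, p t⟫) 0 I s :=
      (hasDerivWithinAt_const s I (1:ℝ)).congr (fun t ht => hpp1 t ht) (hpp1 s hs)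
    have := (d1.derivWithin (hI s hs)).symm.trans (d2.derivWithin (hI s hs))
    have hcomm : ⟪T s, p s⟫ = a s := real_inner_comm _ _
    rw [hcomm] at this
    have : a s + a s = 0 := this
    linarith
  -- κ * b = -1 on I
  have hκb : ∀ s ∈ I, κ s * b s = -1 := by
    intro s hs
    have d1 : HasDerivWithinAt a (⟪p s, κ s • N s⟫ + ⟪T s, T s⟫) I s :=
      (hp s hs).inner ℝ (h.derivT s hs)
    have d2 : HasDerivWithinAt a 0 I s :=
      (hasDerivWithinAt_const s I (0:ℝ)).congr (fun t ht => ha0 t ht) (ha0 s hs)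
    have heq := (d1.derivWithin (hI s hs)).symm.trans (d2.derivWithin (hI s hs))
    rw [real_inner_smul_right, real_inner_self_eq_norm_sq, h.unitT s hs] at heq
    have : κ s * b s + 1 = 0 := by simpa using heq
    linarith
  have hbne : ∀ s ∈ I, b s ≠ 0 := by
    intro s hs hb0
    have := hκb s hs
    rw [hb0, mul_zero] at this
    norm_num at this
  -- b' = τ₀ * cc, cc' = -τ₀ * b
  have hb' : ∀ s ∈ I, HasDerivWithinAt b (τ₀ * cc s) I s := by
    intro s hs
    have d1 : HasDerivWithinAt b (⟪p s, (-κ s) • T s + τ s • B s⟫ + ⟪T s, N s⟫) I s :=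
      (hp s hs).inner ℝ (h.derivN s hs)
    have hv : ⟪p s, (-κ s) • T s + τ s • B s⟫ + ⟪T s, N s⟫ = τ₀ * cc s := by
      rw [inner_add_right, real_inner_smul_right, real_inner_smul_right, h.orthoTN s hs,
        hτ s hs]
      have : ⟪p s, T s⟫ = 0 := ha0 s hs
      rw [this]; ring
    rwa [hv] at d1
  have hc' : ∀ s ∈ I, HasDerivWithinAt cc (-τ₀ * b s) I s := by
    intro s hs
    have d1 : HasDerivWithinAt cc (⟪p s, (-τ s) • N s⟫ + ⟪T s, B s⟫) I s :=
      (hp s hs).inner ℝ (h.derivB s hs)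
    have hv : ⟪p s, (-τ s) • N s⟫ + ⟪T s, B s⟫ = -τ₀ * b s := by
      rw [real_inner_smul_right, h.orthoTB s hs, hτ s hs]; ring
    rwa [hv] at d1
  -- u, v constant
  set u : ℝ → ℝ := fun s => b s * Real.cos (τ₀ * s) - cc s * Real.sin (τ₀ * s) with hu_def
  set v : ℝ → ℝ := fun s => b s * Real.sin (τ₀ * s) + cc s * Real.cos (τ₀ * s) with hv_def
  have hlin : ∀ s : ℝ, HasDerivAt (fun t : ℝ => τ₀ * t) τ₀ s := by
    intro s; simpa using (hasDerivAt_id s).const_mul τ₀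
  have hu' : ∀ s ∈ I, HasDerivWithinAt u 0 I s := by
    intro s hs
    have d : HasDerivWithinAt u
        ((τ₀ * cc s * Real.cos (τ₀ * s) + b s * (-Real.sin (τ₀ * s) * τ₀)) -
          ((-τ₀ * b s) * Real.sin (τ₀ * s) + cc s * (Real.cos (τ₀ * s) * τ₀))) I s :=
      ((hb' s hs).mul ((hlin s).cos).hasDerivWithinAt).sub
        ((hc' s hs).mul ((hlin s).sin).hasDerivWithinAt)
    convert d using 1; ring
  have hv' : ∀ s ∈ I, HasDerivWithinAt v 0 I s := by
    intro s hs
    have d : HasDerivWithinAt v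
        ((τ₀ * cc s * Real.sin (τ₀ * s) + b s * (Real.cos (τ₀ * s) * τ₀)) +
          ((-τ₀ * b s) * Real.cos (τ₀ * s) + cc s * (-Real.sin (τ₀ * s) * τ₀))) I s :=
      ((hb' s hs).mul ((hlin s).sin).hasDerivWithinAt).add
        ((hc' s hs).mul ((hlin s).cos).hasDerivWithinAt)
    convert d using 1; ring
  have huc : ∀ s ∈ I, u s = u 0 :=
    constant_of_derivWithin_zero (fun s hs => (hu' s hs).differentiableWithinAt)
      (fun x hx => (hu' x (Set.Ico_subset_Icc_self hx)).derivWithin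
        (hI x (Set.Ico_subset_Icc_self hx)))
  have hvc : ∀ s ∈ I, v s = v 0 :=
    constant_of_derivWithin_zero (fun s hs => (hv' s hs).differentiableWithinAt)
      (fun x hx => (hv' x (Set.Ico_subset_Icc_self hx)).derivWithin
        (hI x (Set.Ico_subset_Icc_self hx)))
  have h0I : (0:ℝ) ∈ I := Set.left_mem_Icc.mpr hL.le
  have hu0 : u 0 = b 0 := by simp [hu_def]
  have hv0 : v 0 = cc 0 := by simp [hv_def]
  -- explicit formula for b
  have hbform : ∀ s ∈ I, b s = b 0 * Real.cos (τ₀ * s) + cc 0 * Real.sin (τ₀ * s) := by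
    intro s hs
    have h1 := huc s hs
    have h2 := hvc s hs
    rw [hu0] at h1; rw [hv0] at h2
    have key : u s * Real.cos (τ₀ * s) + v s * Real.sin (τ₀ * s) = b s := by
      have := Real.sin_sq_add_cos_sq (τ₀ * s)
      simp only [hu_def, hv_def]
      linear_combination (b s) * this
    rw [h1, h2] at key
    linarith
  -- contradiction
  by_contra hcon
  push_neg at hcon
  have hτabs : 0 < |τ₀| := abs_pos.mpr hτ₀
  set s1 : ℝ := Real.pi / |τ₀| with hs1def
  have hs1pos : 0 < s1 := div_pos Real.pi_pos hτabs
  have hs1I : s1 ∈ I := ⟨hs1pos.le, hcon⟩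
  have hτs1 : Real.cos (τ₀ * s1) = -1 ∧ Real.sin (τ₀ * s1) = 0 := by
    rcases lt_or_gt_of_ne hτ₀ with hneg | hpos
    · have : τ₀ * s1 = -Real.pi := by
        have hτ₀' : (-τ₀) ≠ 0 := neg_ne_zero.mpr hτ₀
        rw [hs1def, abs_of_neg hneg]
        field_simp
      rw [this]; simp [Real.cos_pi, Real.sin_pi]
    · have : τ₀ * s1 = Real.pi := by
        rw [hs1def, abs_of_pos hpos]; field_simp
      rw [this]; simp [Real.cos_pi, Real.sin_pi]
  have hbs1 : b s1 = -(b 0) := by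
    rw [hbform s1 hs1I, hτs1.1, hτs1.2]; ring
  -- IVT on g
  set g : ℝ → ℝ := fun s => b 0 * Real.cos (τ₀ * s) + cc 0 * Real.sin (τ₀ * s) with hg_def
  have hgcont : Continuous g := by fun_prop
  have hsub : Set.uIcc (0:ℝ) s1 ⊆ I := by
    rw [Set.uIcc_of_le hs1pos.le]
    exact Set.Icc_subset_Icc le_rfl hcon
  have hivt := intermediate_value_uIcc (hgcont.continuousOn (s := Set.uIcc (0:ℝ) s1))
  have hg0 : g 0 = b 0 := by simp [hg_def]
  have hgs1 : g s1 = -(b 0) := by rw [hg_def]; simp only; rw [hτs1.1, hτs1.2]; ring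
  have h0mem : (0:ℝ) ∈ Set.uIcc (g 0) (g s1) := by
    rw [hg0, hgs1, Set.mem_uIcc]
    rcases le_total (b 0) 0 with h' | h'
    · left; constructor <;> linarith
    · right; constructor <;> linarith
  obtain ⟨x, hx, hgx⟩ := hivt h0mem
  have hxI : x ∈ I := hsub hx
  have : b x = 0 := by rw [hbform x hxI]; exact hgx
  exact hbne x hxI this
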